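/- arXiv:1002.3866 — 5 statements merged into one kernel-verified Lean document; each statement's English description precedes it below -/
import Mathlib

section
/- The map φ defined on strict pin words by replacing the first two letters u₁u₂ (a numeral followed by a direction) according to the table 1R↦RUR, 2R↦LUR, 3R↦LDR, 4R↦RDR, 1L↦RUL, 2L↦LUL, 3L↦LDL, 4L↦RDL, 1U↦URU, 2U↦ULU, 3U↦DLU, 4U↦DRU, 1D↦URD, 2D↦ULD, 3D↦DLD, 4D↦DRD, and leaving the remaining letters unchanged, is a bijection from the set of strict pin words of length n (for any n ≥ 2) onto the set M_{n+1} of words of length n+1 over {L,R,U,D} in which every letter from {L,R} is followed by a letter from {U,D} and vice versa. -/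
namespace PinWords

inductive Letter | N1 | N2 | N3 | N4 | U | D | L | R
  deriving DecidableEq

open Letter

def isNumeral : Letter → Prop
  | N1 | N2 | N3 | N4 => True
  | _ => False

def isDir : Letter → Prop
  | U | D | L | R => True
  | _ => False

def isVert : Letter → Prop
  | U | D => True
  | _ => False

def isHoriz : Letter → Prop
  | L | R => True
  | _ => False

/-- Consecutive letters alternate between the horizontal class {L,R}
and the vertical class {U,D}. -/
def Alternating : List Letter → Prop
  | a :: b :: rest => ((isHoriz a ∧ isVert b) ∨ (isVert a ∧ isHoriz b)) ∧ Alternating (b :: rest)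
  | _ => True

/-- A strict pin word: a numeral followed by a nonempty alternating sequence of directions. -/
def StrictPinWord : List Letter → Prop
  | c :: rest => isNumeral c ∧ rest ≠ [] ∧ (∀ x ∈ rest, isDir x) ∧ Alternating rest
  | [] => False

/-- A quasi-strict pin word: two numerals followed by alternating directions. -/
def QuasiStrictPinWord : List Letter → Prop
  | c :: d :: rest => isNumeral c ∧ isNumeral d ∧ (∀ x ∈ rest, isDir x) ∧ Alternating rest
  | _ => False

/-- The set M : alternating direction words of length at least 3. -/
def InM (w : List Letter) : Prop :=
  3 ≤ w.length ∧ (∀ c ∈ w, isDir c) ∧ Alternating w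

/-- The table defining φ on the first two letters. -/
def varphi : Letter → Letter → List Letter
  | N1, R => [R, U, R] | N2, R => [L, U, R] | N3, R => [L, D, R] | N4, R => [R, D, R]
  | N1, L => [R, U, L] | N2, L => [L, U, L] | N3, L => [L, D, L] | N4, L => [R, D, L]
  | N1, U => [U, R, U] | N2, U => [U, L, U] | N3, U => [D, L, U] | N4, U => [D, R, U]
  | N1, D => [U, R, D] | N2, D => [U, L, D] | N3, D => [D, L, D] | N4, D => [D, R, D]
  | a, b => [a, b]

/-- The map φ : replace the first two letters according to the table, keep the rest. -/
def phi : List Letter → List Letter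
  | a :: b :: rest => varphi a b ++ rest
  | w => w

/-- φ⁻¹ on two-letter direction words, giving a numeral. -/
def phiInv2 : Letter → Letter → Letter
  | R, U => N1 | U, R => N1
  | L, U => N2 | U, L => N2
  | L, D => N3 | D, L => N3
  | R, D => N4 | D, R => N4
  | _, _ => N1

/-- The quadrant function q on pairs of consecutive letters of a pin word. -/
def qfun (a b : Letter) : Letter :=
  match a with
  | N1 | N2 | N3 | N4 =>
    match varphi a b with
    | [_, x, y] => phiInv2 x y
    | _ => N1
  | _ => phiInv2 a b

/-- A strong numeral-led factor: a numeral followed by directions. -/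
def IsSNLF : List Letter → Prop
  | c :: rest => isNumeral c ∧ ∀ x ∈ rest, isDir x
  | [] => False

/-- The order ≼ on pin words of Brignall, Ruškuc and Vatter, via strong
numeral-led factor decompositions.  Each element of `t` is a triple
`(uᵢ, vᵢ, wᵢ)`. -/
def PinOrder (u w : List Letter) : Prop :=
  ∃ (t : List (List Letter × List Letter × List Letter)) (vfin : List Letter),
    u = (t.map fun x => x.1).flatten ∧
    w = (t.map fun x => x.2.1 ++ x.2.2).flatten ++ vfin ∧
    ∀ x ∈ t, IsSNLF x.1 ∧
      ((∃ c rest, x.2.2 = c :: rest ∧ isNumeral c ∧ x.2.2 = x.1) ∨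
       (∃ c rest l uc, x.2.2 = c :: rest ∧ isDir c ∧ x.2.1.getLast? = some l ∧
          x.1 = uc :: rest ∧ qfun l c = uc))

/-! ### Pin sequences in the plane -/

abbrev Pt := ℤ × ℤ

def SepVert (c : Pt) (P Q : Set Pt) : Prop :=
  ((∀ a ∈ P, a.1 < c.1) ∧ (∀ b ∈ Q, c.1 < b.1)) ∨
  ((∀ a ∈ P, c.1 < a.1) ∧ (∀ b ∈ Q, b.1 < c.1))

def SepHoriz (c : Pt) (P Q : Set Pt) : Prop :=
  ((∀ a ∈ P, a.2 < c.2) ∧ (∀ b ∈ Q, c.2 < b.2)) ∨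
  ((∀ a ∈ P, c.2 < a.2) ∧ (∀ b ∈ Q, b.2 < c.2))

/-- A horizontal or vertical line through `c` separates `P` from `Q`. -/
def Separates (c : Pt) (P Q : Set Pt) : Prop := SepVert c P Q ∨ SepHoriz c P Q

/-- `c` does not separate `S` into two nonempty parts. -/
def Independent (c : Pt) (S : Set Pt) : Prop :=
  ¬((∃ a ∈ S, a.1 < c.1) ∧ (∃ a ∈ S, c.1 < a.1)) ∧
  ¬((∃ a ∈ S, a.2 < c.2) ∧ (∃ a ∈ S, c.2 < a.2))

/-- `c` lies in the bounding box of `S`. -/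
def InBox (S : Set Pt) (c : Pt) : Prop :=
  (∃ a ∈ S, a.1 ≤ c.1) ∧ (∃ a ∈ S, c.1 ≤ a.1) ∧ (∃ a ∈ S, a.2 ≤ c.2) ∧ (∃ a ∈ S, c.2 ≤ a.2)

def DistinctCoords {n : ℕ} (p : Fin n → Pt) : Prop :=
  ∀ i j, i ≠ j → (p i).1 ≠ (p j).1 ∧ (p i).2 ≠ (p j).2

/-- The set of points `p j` for `j < i`. -/
def prevSet {n : ℕ} (p : Fin n → Pt) (i : ℕ) : Set Pt := {x | ∃ j : Fin n, j.val < i ∧ x = p j}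

/-- A pin sequence (0-indexed): each pin lies outside the bounding box of the
previous ones and either separates the previous pin from the earlier ones, or
is independent. -/
def IsPinSeq {n : ℕ} (p : Fin n → Pt) : Prop :=
  DistinctCoords p ∧
  ∀ i : Fin n, 1 ≤ i.val →
    ¬ InBox (prevSet p i.val) (p i) ∧
    (Separates (p i) {x | ∃ j : Fin n, j.val + 1 = i.val ∧ x = p j} (prevSet p (i.val - 1)) ∨
     Independent (p i) (prevSet p i.val))

/-- A proper pin sequence: from the third pin on, each pin separates the
previous pin from the earlier ones. -/
def IsProperPinSeq {n : ℕ} (p : Fin n → Pt) : Prop :=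
  IsPinSeq p ∧
  ∀ i : Fin n, 2 ≤ i.val →
    Separates (p i) {x | ∃ j : Fin n, j.val + 1 = i.val ∧ x = p j} (prevSet p (i.val - 1))

/-- The sequence of points `p` is order isomorphic to the diagram of `σ`. -/
def RepresentsPerm {k m : ℕ} (p : Fin k → Pt) (σ : Equiv.Perm (Fin m)) : Prop :=
  ∃ e : Fin k ≃ Fin m, ∀ i j : Fin k,
    ((p i).1 < (p j).1 ↔ e i < e j) ∧ ((p i).2 < (p j).2 ↔ σ (e i) < σ (e j))

def IsIntervalSet {n : ℕ} (S : Set (Fin n)) : Prop :=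
  ∀ a ∈ S, ∀ b ∈ S, ∀ c, a ≤ c → c ≤ b → c ∈ S

/-- A simple permutation: no nontrivial block. -/
def IsSimplePerm {n : ℕ} (σ : Equiv.Perm (Fin n)) : Prop :=
  ∀ S : Set (Fin n), IsIntervalSet S → IsIntervalSet (σ '' S) → S.ncard ≤ 1 ∨ S = Set.univ

/-- Pattern containment of permutations. -/
def IsPattern {k n : ℕ} (π : Equiv.Perm (Fin k)) (σ : Equiv.Perm (Fin n)) : Prop :=
  ∃ f : Fin k → Fin n, StrictMono f ∧ ∀ i j : Fin k, π i < π j ↔ σ (f i) < σ (f j)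

/-- The meaning of a letter of a pin word: `prev` is the set of all earlier
points (including the origin), `prevPin` is the previous pin, `older` is
`prev` minus the previous pin. -/
def LetterEncodes (c : Letter) (pt : Pt) (prev prevPin older : Set Pt) : Prop :=
  match c with
  | U => (∀ a ∈ prev, a.2 < pt.2) ∧ SepVert pt prevPin older
  | D => (∀ a ∈ prev, pt.2 < a.2) ∧ SepVert pt prevPin older
  | L => (∀ a ∈ prev, pt.1 < a.1) ∧ SepHoriz pt prevPin older
  | R => (∀ a ∈ prev, a.1 < pt.1) ∧ SepHoriz pt prevPin older
  | N1 => Independent pt prev ∧ ∀ a ∈ prev, a.1 < pt.1 ∧ a.2 < pt.2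
  | N2 => Independent pt prev ∧ ∀ a ∈ prev, pt.1 < a.1 ∧ a.2 < pt.2
  | N3 => Independent pt prev ∧ ∀ a ∈ prev, pt.1 < a.1 ∧ pt.2 < a.2
  | N4 => Independent pt prev ∧ ∀ a ∈ prev, a.1 < pt.1 ∧ pt.2 < a.2

/-- The word `w` encodes the extended pin sequence `p₀, p₁, …, p_n`
(the origin is `p 0`). -/
def Encodes (w : List Letter) (p : Fin (w.length + 1) → Pt) : Prop :=
  DistinctCoords p ∧
  ∀ k : Fin w.length,
    LetterEncodes (w.get k) (p k.succ)
      (prevSet p (k.val + 1))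
      {x | ∃ j : Fin (w.length + 1), j.val = k.val ∧ x = p j}
      (prevSet p k.val)

/-- The pin word `w` corresponds to the permutation `σ`. -/
def WordRepresents (w : List Letter) {m : ℕ} (σ : Equiv.Perm (Fin m)) : Prop :=
  ∃ p : Fin (w.length + 1) → Pt, Encodes w p ∧
    RepresentsPerm (fun i : Fin w.length => p i.succ) σ

/-- A proper pin-permutation: one admitting a proper pin representation. -/
def ProperPinPerm {n : ℕ} (σ : Equiv.Perm (Fin n)) : Prop :=
  ∃ p : Fin n → Pt, IsProperPinSeq p ∧ RepresentsPerm p σ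

/-- `pt` lies in the quadrant named by the numeral `c` of the bounding box of `S`. -/
def InQuadrant (c : Letter) (pt : Pt) (S : Set Pt) : Prop :=
  match c with
  | N1 => ∀ a ∈ S, a.1 < pt.1 ∧ a.2 < pt.2
  | N2 => ∀ a ∈ S, pt.1 < a.1 ∧ a.2 < pt.2
  | N3 => ∀ a ∈ S, pt.1 < a.1 ∧ pt.2 < a.2
  | N4 => ∀ a ∈ S, a.1 < pt.1 ∧ pt.2 < a.2
  | _ => False

/-- Two points are in knight position. -/
def Knight (a b : Pt) : Prop :=
  (|a.1 - b.1| = 1 ∧ |a.2 - b.2| = 2) ∨ (|a.1 - b.1| = 2 ∧ |a.2 - b.2| = 1)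

/-- The set E(π) of forbidden factors associated to a simple permutation π. -/
def Epi {m : ℕ} (π : Equiv.Perm (Fin m)) : Set (List Letter) :=
  {v | ∃ u, StrictPinWord u ∧ WordRepresents u π ∧ v = phi u} ∪
  {v | ∃ u x, QuasiStrictPinWord u ∧ WordRepresents u π ∧
      x.length = 2 ∧ (∀ c ∈ x, isDir c) ∧ v = x ++ phi u.tail ∧ Alternating v}

def Pair (a b : Letter) : Prop := (isHoriz a ∧ isVert b) ∨ (isVert a ∧ isHoriz b)

lemma varphi_spec (a b : Letter) (ha : isNumeral a) (hb : isDir b) :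
    ∃ x y, varphi a b = [x, y, b] ∧ isDir x ∧ isDir y ∧ Pair x y ∧ Pair y b := by
  cases a <;> cases b <;> simp_all [isNumeral, isDir] <;>
  · first
    | exact ⟨_, _, rfl, trivial, trivial,
        Or.inl ⟨trivial, trivial⟩, Or.inr ⟨trivial, trivial⟩⟩
    | exact ⟨_, _, rfl, trivial, trivial,
        Or.inr ⟨trivial, trivial⟩, Or.inl ⟨trivial, trivial⟩⟩

lemma varphi_inj (a a' b : Letter) (ha : isNumeral a) (ha' : isNumeral a')
    (h : varphi a b = varphi a' b) : a = a' := by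
  cases a <;> cases a' <;> cases b <;> simp_all [isNumeral, varphi]

lemma phiInv2_spec (x y z : Letter) (hx : isDir x) (hy : isDir y) (hz : isDir z)
    (h1 : Pair x y) (h2 : Pair y z) :
    isNumeral (phiInv2 x y) ∧ varphi (phiInv2 x y) z = [x, y, z] := by
  cases x <;> cases y <;> cases z <;>
    simp_all [isDir, Pair, isHoriz, isVert, phiInv2, varphi, isNumeral]

/-- φ is a bijection from strict pin words of length n (n ≥ 2)
onto the words of M of length n+1. -/
theorem phi_bijOn (n : ℕ) (hn : 2 ≤ n) :
    Set.BijOn phi {w : List Letter | StrictPinWord w ∧ w.length = n}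
      {w : List Letter | InM w ∧ w.length = n + 1} := by
  refine ⟨?_, ?_, ?_⟩
  · rintro u ⟨hs, hl⟩
    match u with
    | [] => exact absurd hs id
    | [a] => exact absurd rfl hs.2.1
    | a :: b :: rest =>
      obtain ⟨ha, -, hdirs, halt⟩ := hs
      obtain ⟨x, y, hv, hx, hy, hp1, hp2⟩ :=
        varphi_spec a b ha (hdirs b (by simp))
      show InM (phi (a :: b :: rest)) ∧ (phi (a :: b :: rest)).length = n + 1
      have hphi : phi (a :: b :: rest) = x :: y :: b :: rest := by
        simp [phi, hv]
      rw [hphi]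
      simp only [List.length_cons] at hl
      refine ⟨⟨by simp, ?_, ?_⟩, by simp; omega⟩
      · intro c hc
        simp only [List.mem_cons] at hc
        rcases hc with rfl | rfl | rfl | hc
        · exact hx
        · exact hy
        · exact hdirs _ (by simp)
        · exact hdirs c (by simp [hc])
      · exact ⟨hp1, hp2, halt⟩
  · rintro u ⟨hs, hl⟩ u' ⟨hs', hl'⟩ h
    match u, u' with
    | [], _ => exact absurd hs id
    | _ :: _, [] => exact absurd hs' id
    | [a], _ => exact absurd rfl hs.2.1
    | _ :: _ :: _, [a'] => exact absurd rfl hs'.2.1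
    | a :: b :: rest, a' :: b' :: rest' =>
      obtain ⟨ha, -, hdirs, -⟩ := hs
      obtain ⟨ha', -, hdirs', -⟩ := hs'
      obtain ⟨x, y, hv, -⟩ := varphi_spec a b ha (hdirs b (by simp))
      obtain ⟨x', y', hv', -⟩ := varphi_spec a' b' ha' (hdirs' b' (by simp))
      have h' : x :: y :: b :: rest = x' :: y' :: b' :: rest' := by
        simpa [phi, hv, hv'] using h
      obtain ⟨rfl, rfl, rfl, rfl⟩ : x = x' ∧ y = y' ∧ b = b' ∧ rest = rest' := by
        simpa using h'
      have : a = a' := varphi_inj a a' b ha ha' (hv.trans hv'.symm)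
      rw [this]
  · rintro w ⟨⟨hlen3, hdirs, halt⟩, hlen⟩
    match w with
    | [] => simp at hlen3
    | [_] => simp at hlen3
    | [_, _] => simp at hlen3
    | x :: y :: z :: rest =>
      have hx : isDir x := hdirs x (by simp)
      have hy : isDir y := hdirs y (by simp)
      have hz : isDir z := hdirs z (by simp)
      obtain ⟨hp1, hp2, halt'⟩ : Pair x y ∧ Pair y z ∧ Alternating (z :: rest) := halt
      obtain ⟨hnum, hv⟩ := phiInv2_spec x y z hx hy hz hp1 hp2
      refine ⟨phiInv2 x y :: z :: rest, ⟨⟨hnum, by simp, ?_, halt'⟩, ?_⟩, ?_⟩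
      · intro c hc
        simp only [List.mem_cons] at hc
        rcases hc with rfl | hc
        · exact hz
        · exact hdirs c (by simp [hc])
      · simp only [List.length_cons] at hlen ⊢; omega
      · simp [phi, hv]

end PinWords
end

section
/- For strict pin words u and w, u ≼ w if and only if φ(u) is a factor (contiguous subword) of φ(w). -/
namespace PinWords

open Letter

/-! ### Auxiliary material for the proof of `pinOrder_iff_factor` -/

instance : DecidablePred isNumeral := fun c => by
  cases c <;> first | exact isTrue trivial | exact isFalse id

instance : DecidablePred isDir := fun c => by
  cases c <;> first | exact isTrue trivial | exact isFalse id

instance : DecidablePred isVert := fun c => by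
  cases c <;> first | exact isTrue trivial | exact isFalse id

instance : DecidablePred isHoriz := fun c => by
  cases c <;> first | exact isTrue trivial | exact isFalse id

instance : Fintype Letter :=
  ⟨⟨[Letter.N1, Letter.N2, Letter.N3, Letter.N4,
     Letter.U, Letter.D, Letter.L, Letter.R], by decide⟩,
   fun x => by cases x <;> decide⟩

/-- Two letters in opposite direction classes. -/
def AltPair (a b : Letter) : Prop := (isHoriz a ∧ isVert b) ∨ (isVert a ∧ isHoriz b)

instance : ∀ a b, Decidable (AltPair a b) := fun a b => by unfold AltPair; infer_instance

lemma dir_not_num : ∀ c, isDir c → isNumeral c → False := by decide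

lemma varphi_shape : ∀ a b, isNumeral a → isDir b →
    ∃ x y, varphi a b = [x, y, b] ∧ isDir x ∧ isDir y ∧ phiInv2 x y = a := by decide

lemma qfun_dir : ∀ x y, isDir x → qfun x y = phiInv2 x y := by decide

lemma qfun_num : ∀ n e p q, isNumeral n → varphi n e = [p, q, e] →
    qfun n e = phiInv2 q e := by decide

lemma lemA : ∀ l c d, isDir l → isDir c → isDir d → AltPair l c → AltPair c d →
    varphi (phiInv2 l c) d = [l, c, d] := by decide

lemma lemB : ∀ n c d, isNumeral n → isDir c → isDir d → AltPair c d →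
    ∃ p q, varphi n c = [p, q, c] ∧ varphi (qfun n c) d = [q, c, d] := by decide

lemma alt_cons (x : Letter) (l : List Letter) (h : Alternating (x :: l)) : Alternating l := by
  cases l with
  | nil => trivial
  | cons b r => exact h.2

lemma alt_pair_of_append : ∀ (xs : List Letter) (a b : Letter) (ys : List Letter),
    Alternating (xs ++ a :: b :: ys) → AltPair a b := by
  intro xs
  induction xs with
  | nil => exact fun a b ys h => h.1
  | cons x xs ih => exact fun a b ys h => ih a b ys (alt_cons _ _ h)

lemma strict_shape {u : List Letter} (hu : StrictPinWord u) :
    ∃ a b r, u = a :: b :: r ∧ isNumeral a ∧ (∀ x ∈ b :: r, isDir x) ∧ Alternating (b :: r) := by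
  cases u with
  | nil => exact hu.elim
  | cons a rest =>
    cases rest with
    | nil => exact absurd rfl hu.2.1
    | cons b r => exact ⟨a, b, r, rfl, hu.1, hu.2.2.1, hu.2.2.2⟩

lemma infix_phi_cons (n : Letter) (hn : isNumeral n) (v : List Letter)
    (hv : ∀ x ∈ v, isDir x) (a : Letter) (ha : isDir a) (z : List Letter) :
    (a :: z) <:+: phi (n :: (v ++ a :: z)) := by
  cases v with
  | nil =>
    obtain ⟨x, y, hxy, -, -, -⟩ := varphi_shape n a hn ha
    exact ⟨[x, y], [], by simp [phi, hxy]⟩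
  | cons g v' =>
    exact ⟨varphi n g ++ v', [], by simp [phi]⟩

lemma t_singleton {u : List Letter} (hu : StrictPinWord u)
    (t : List (List Letter × List Letter × List Letter))
    (huq : u = (t.map fun x => x.1).flatten)
    (hsnlf : ∀ x ∈ t, IsSNLF x.1) :
    ∃ x, t = [x] ∧ u = x.1 := by
  cases t with
  | nil => simp at huq; rw [huq] at hu; exact hu.elim
  | cons x t' =>
    cases t' with
    | nil => exact ⟨x, rfl, by simpa using huq⟩
    | cons y t'' =>
      exfalso
      have hx := hsnlf x (by simp)
      have hy := hsnlf y (by simp)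
      obtain ⟨c0, r0, hx1⟩ : ∃ c r, x.1 = c :: r := by
        cases h : x.1 with
        | nil => rw [h] at hx; exact hx.elim
        | cons c r => exact ⟨c, r, rfl⟩
      obtain ⟨c1, r1, hy1⟩ : ∃ c r, y.1 = c :: r := by
        cases h : y.1 with
        | nil => rw [h] at hy; exact hy.elim
        | cons c r => exact ⟨c, r, rfl⟩
      rw [hy1] at hy
      obtain ⟨a, b, r, huabr, -, hdirs, -⟩ := strict_shape hu
      have hc1 : c1 ∈ List.tail u := by
        rw [huq]
        simp only [List.map_cons, List.flatten_cons, hx1, hy1]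
        simp
      rw [huabr] at hc1
      exact dir_not_num c1 (hdirs c1 hc1) hy.1
/-- for strict pin words u and w, u ≼ w iff φ(u) is a factor of φ(w). -/
theorem pinOrder_iff_factor (u w : List Letter)
    (hu : StrictPinWord u) (hw : StrictPinWord w) :
    PinOrder u w ↔ phi u <:+: phi w := by
  obtain ⟨a, b, r, hu_eq, ha, hudirs, hualt⟩ := strict_shape hu
  obtain ⟨n, e, s, hw_eq, hn, hwdirs, hwalt⟩ := strict_shape hw
  constructor
  · rintro ⟨t, vfin, huq, hwq, hcond⟩
    obtain ⟨x, rfl, hux⟩ := t_singleton hu t huq (fun z hz => (hcond z hz).1)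
    obtain hcase := (hcond x (by simp)).2
    simp only [List.map_cons, List.map_nil, List.flatten_cons, List.flatten_nil,
      List.append_nil] at hwq
    rcases hcase with ⟨c, rest, hx22, hcnum, hx22u⟩ |
      ⟨c, rest, l, uc, hx22, hcdir, hlast, hx1, hq⟩
    · -- Case A : w₁ = u begins with a numeral
      rw [hx22u, ← hux] at hwq
      have hv1 : x.2.1 = [] := by
        cases hv : x.2.1 with
        | nil => rfl
        | cons z v' =>
          exfalso
          have hmem : a ∈ List.tail w := by
            rw [hwq, hv, hu_eq]; simp
          rw [hw_eq] at hmem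
          exact dir_not_num a (hwdirs a hmem) ha
      rw [hv1, List.nil_append] at hwq
      rw [hwq, hu_eq]
      exact ⟨[], vfin, by simp [phi]⟩
    · -- Case B : w₁ begins with a direction
      rw [← hux, hu_eq] at hx1
      obtain ⟨rfl, rfl⟩ : a = uc ∧ b :: r = rest := by
        injection hx1 with h1 h2; exact ⟨h1, h2⟩
      obtain ⟨v0, hv0⟩ := List.getLast?_eq_some_iff.mp hlast
      rw [hx22, hv0] at hwq
      have hb : isDir b := hudirs b (by simp)
      cases v0 with
      | nil =>
        have hw2 : n :: e :: s = l :: c :: b :: (r ++ vfin) := by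
          rw [← hw_eq, hwq]; simp
        obtain ⟨h1, h2, hs⟩ : n = l ∧ e = c ∧ s = b :: (r ++ vfin) := by
          injection hw2 with h1 h2; injection h2 with h2 h3
          exact ⟨h1, h2, h3⟩
        subst h1; subst h2; subst hs
        have hcb : AltPair e b := hwalt.1
        obtain ⟨p, q, hpc, hqd⟩ := lemB n e b hn hcdir hb hcb
        rw [hq] at hqd
        rw [hwq, hu_eq]
        exact ⟨[p], vfin, by simp [phi, hpc, hqd]⟩
      | cons g v0' =>
        have hw2 : n :: e :: s = g :: (v0' ++ l :: c :: b :: (r ++ vfin)) := by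
          rw [← hw_eq, hwq]; simp
        obtain ⟨h1, hes⟩ : n = g ∧ e :: s = v0' ++ l :: c :: b :: (r ++ vfin) := by
          injection hw2 with h1 h2; exact ⟨h1, h2⟩
        subst h1
        have hld : isDir l := hwdirs l (by rw [hes]; simp)
        have hlc : AltPair l c := alt_pair_of_append v0' l c _ (by rw [← hes]; exact hwalt)
        have hcb : AltPair c b := by
          refine alt_pair_of_append (v0' ++ [l]) c b (r ++ vfin) ?_
          have h := hwalt
          rw [hes] at h
          simpa using h
        have hA : varphi a b = [l, c, b] := by
          rw [← hq, qfun_dir l c hld]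
          exact lemA l c b hld hcdir hb hlc hcb
        have hphiu : phi u = l :: c :: b :: r := by rw [hu_eq]; simp [phi, hA]
        have hmain := infix_phi_cons n hn v0'
          (fun z hz => hwdirs z (by rw [hes]; exact List.mem_append_left _ hz))
          l hld (c :: b :: (r ++ vfin))
        have hw3 : w = n :: (v0' ++ l :: c :: b :: (r ++ vfin)) := by rw [hw_eq, hes]
        rw [hw3, hphiu]
        exact List.IsInfix.trans (List.IsPrefix.isInfix ⟨vfin, by simp⟩) hmain
  · rintro ⟨s1, s2, heq⟩
    have hbd : isDir b := hudirs b (by simp)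
    have hed : isDir e := hwdirs e (by simp)
    obtain ⟨x, y, hxy, hxd, hyd, hinv⟩ := varphi_shape a b ha hbd
    obtain ⟨p, q, hpq, hpd, hqd, hpinv⟩ := varphi_shape n e hn hed
    rw [hu_eq, hw_eq] at heq
    simp only [phi, hxy, hpq] at heq
    cases s1 with
    | nil =>
      simp only [List.cons_append, List.nil_append, List.append_assoc,
        List.cons.injEq] at heq
      obtain ⟨rfl, rfl, rfl, hs⟩ := heq
      have han : a = n := by rw [← hinv]; exact hpinv
      refine ⟨[(a :: b :: r, [], a :: b :: r)], s2, by rw [hu_eq]; simp, ?_, ?_⟩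
      · rw [hw_eq, ← hs, han]; simp
      · intro z hz
        rw [List.mem_singleton] at hz; subst hz
        exact ⟨⟨ha, hudirs⟩, Or.inl ⟨a, b :: r, rfl, ha, rfl⟩⟩
    | cons z1 s1' =>
      cases s1' with
      | nil =>
        simp only [List.cons_append, List.nil_append, List.append_assoc,
          List.cons.injEq] at heq
        obtain ⟨rfl, rfl, rfl, hs⟩ := heq
        refine ⟨[(a :: b :: r, [n], y :: b :: r)], s2, by rw [hu_eq]; simp, ?_, ?_⟩
        · rw [hw_eq, ← hs]; simp
        · intro z hz
          rw [List.mem_singleton] at hz; subst hz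
          exact ⟨⟨ha, hudirs⟩, Or.inr ⟨y, b :: r, n, a, rfl, hyd, by simp, rfl,
            (qfun_num n y z1 x hn hpq).trans hinv⟩⟩
      | cons z2 s1'' =>
        simp only [List.cons_append, List.nil_append, List.append_assoc,
          List.cons.injEq] at heq
        obtain ⟨rfl, rfl, heq2⟩ := heq
        refine ⟨[(a :: b :: r, n :: s1'' ++ [x], y :: b :: r)], s2,
          by rw [hu_eq]; simp, ?_, ?_⟩
        · rw [hw_eq, ← heq2]; simp
        · intro z hz
          rw [List.mem_singleton] at hz; subst hz
          exact ⟨⟨ha, hudirs⟩, Or.inr ⟨y, b :: r, x, a, rfl, hyd,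
            List.getLast?_concat, rfl, (qfun_dir x y hxd).trans hinv⟩⟩

end PinWords
end

section
/- Any pin representation of a simple pin-permutation is proper, i.e., for every i ≥ 3 the pin p_i separates p_{i-1} from {p₁,…,p_{i-2}}. -/
namespace PinWords

open Letter

lemma notbox_y (c : Pt) (S : Set Pt) (hbox : ¬ InBox S c)
    (hxl : ∃ a ∈ S, a.1 ≤ c.1) (hxr : ∃ a ∈ S, c.1 ≤ a.1) :
    (∀ a ∈ S, a.2 < c.2) ∨ (∀ a ∈ S, c.2 < a.2) := by
  by_contra hcon
  push_neg at hcon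
  obtain ⟨⟨a, haS, ha⟩, ⟨b, hbS, hb⟩⟩ := hcon
  exact hbox ⟨hxl, hxr, ⟨b, hbS, hb⟩, ⟨a, haS, ha⟩⟩

lemma notbox_x (c : Pt) (S : Set Pt) (hbox : ¬ InBox S c)
    (hyl : ∃ a ∈ S, a.2 ≤ c.2) (hyr : ∃ a ∈ S, c.2 ≤ a.2) :
    (∀ a ∈ S, a.1 < c.1) ∨ (∀ a ∈ S, c.1 < a.1) := by
  by_contra hcon
  push_neg at hcon
  obtain ⟨⟨a, haS, ha⟩, ⟨b, hbS, hb⟩⟩ := hcon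
  exact hbox ⟨⟨b, hbS, hb⟩, ⟨a, haS, ha⟩, hyl, hyr⟩

lemma indep_oneSided (c : Pt) (S B : Set Pt) (hBS : B ⊆ S)
    (hne : ∀ a ∈ B, a.1 ≠ c.1 ∧ a.2 ≠ c.2) (hind : Independent c S) :
    ((∀ a ∈ B, a.1 < c.1) ∨ (∀ a ∈ B, c.1 < a.1)) ∧
    ((∀ a ∈ B, a.2 < c.2) ∨ (∀ a ∈ B, c.2 < a.2)) := by
  constructor
  · by_cases h : ∀ a ∈ B, a.1 < c.1
    · exact Or.inl h
    · push_neg at h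
      obtain ⟨a, haB, ha⟩ := h
      have ha' : c.1 < a.1 := lt_of_le_of_ne ha (Ne.symm ((hne a haB).1))
      refine Or.inr fun b hbB => ?_
      by_contra hb
      have hb' : b.1 < c.1 := lt_of_le_of_ne (le_of_not_gt hb) ((hne b hbB).1)
      exact hind.1 ⟨⟨b, hBS hbB, hb'⟩, ⟨a, hBS haB, ha'⟩⟩
  · by_cases h : ∀ a ∈ B, a.2 < c.2
    · exact Or.inl h
    · push_neg at h
      obtain ⟨a, haB, ha⟩ := h
      have ha' : c.2 < a.2 := lt_of_le_of_ne ha (Ne.symm ((hne a haB).2))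
      refine Or.inr fun b hbB => ?_
      by_contra hb
      have hb' : b.2 < c.2 := lt_of_le_of_ne (le_of_not_gt hb) ((hne b hbB).2)
      exact hind.2 ⟨⟨b, hBS hbB, hb'⟩, ⟨a, hBS haB, ha'⟩⟩

/-- If pin `i` is independent, then every pin `k ≥ i` has all of the first `i`
points strictly on one side in each coordinate. -/
lemma oneSided {n : ℕ} (p : Fin n → Pt) (hpin : IsPinSeq p) (i : Fin n) (hi : 2 ≤ i.val)
    (hind : Independent (p i) (prevSet p i.val)) (k : Fin n) (hk : i.val ≤ k.val) :
    ((∀ a ∈ prevSet p i.val, a.1 < (p k).1) ∨ (∀ a ∈ prevSet p i.val, (p k).1 < a.1)) ∧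
    ((∀ a ∈ prevSet p i.val, a.2 < (p k).2) ∨ (∀ a ∈ prevSet p i.val, (p k).2 < a.2)) := by
  have hdist := hpin.1
  have hne : ∀ a ∈ prevSet p i.val, a.1 ≠ (p k).1 ∧ a.2 ≠ (p k).2 := by
    rintro a ⟨j, hj, rfl⟩
    exact hdist j k (Fin.ne_of_val_ne (Nat.ne_of_lt (lt_of_lt_of_le hj hk)))
  rcases eq_or_lt_of_le hk with heq | hlt
  · have hki : k = i := Fin.ext heq.symm
    subst hki
    exact indep_oneSided (p k) (prevSet p k.val) (prevSet p k.val) (fun _ h => h) hne hind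
  · have hk1 : 1 ≤ k.val := by omega
    obtain ⟨hbox, hsep⟩ := hpin.2 k hk1
    have hBsub : prevSet p i.val ⊆ prevSet p k.val := by
      rintro a ⟨j, hj, rfl⟩; exact ⟨j, by omega, rfl⟩
    have hneK : ∀ a ∈ prevSet p k.val, a.1 ≠ (p k).1 ∧ a.2 ≠ (p k).2 := by
      rintro a ⟨j, hj, rfl⟩
      exact hdist j k (Fin.ne_of_val_ne (Nat.ne_of_lt hj))
    rcases hsep with hsep | hind'
    · -- Separates case
      have hBQ : prevSet p i.val ⊆ prevSet p (k.val - 1) := by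
        rintro a ⟨j, hj, rfl⟩; exact ⟨j, by omega, rfl⟩
      have hk1' : k.val - 1 < n := lt_trans (by omega) k.isLt
      set j1 : Fin n := ⟨k.val - 1, hk1'⟩ with hj1def
      have hj1P : p j1 ∈ {x | ∃ j : Fin n, j.val + 1 = k.val ∧ x = p j} :=
        ⟨j1, by simp [hj1def]; omega, rfl⟩
      have hj1K : p j1 ∈ prevSet p k.val := ⟨j1, by simp [hj1def]; omega, rfl⟩
      set j0 : Fin n := ⟨0, lt_of_le_of_lt (Nat.zero_le _) k.isLt⟩ with hj0def
      have hj0Q : p j0 ∈ prevSet p (k.val - 1) := ⟨j0, by simp [hj0def]; omega, rfl⟩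
      have hj0K : p j0 ∈ prevSet p k.val := ⟨j0, by simp [hj0def]; omega, rfl⟩
      rcases hsep with hv | hh
      · -- vertical separation: B is one-sided in x; use ¬InBox for y
        have hxlr : (∃ a ∈ prevSet p k.val, a.1 ≤ (p k).1) ∧
            (∃ a ∈ prevSet p k.val, (p k).1 ≤ a.1) := by
          rcases hv with ⟨hP, hQ⟩ | ⟨hP, hQ⟩
          · exact ⟨⟨p j1, hj1K, le_of_lt (hP _ hj1P)⟩, ⟨p j0, hj0K, le_of_lt (hQ _ hj0Q)⟩⟩
          · exact ⟨⟨p j0, hj0K, le_of_lt (hQ _ hj0Q)⟩, ⟨p j1, hj1K, le_of_lt (hP _ hj1P)⟩⟩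
        have hy := notbox_y (p k) (prevSet p k.val) hbox hxlr.1 hxlr.2
        refine ⟨?_, hy.imp (fun h a ha => h a (hBsub ha)) (fun h a ha => h a (hBsub ha))⟩
        rcases hv with ⟨_, hQ⟩ | ⟨_, hQ⟩
        · exact Or.inr fun a ha => hQ a (hBQ ha)
        · exact Or.inl fun a ha => hQ a (hBQ ha)
      · -- horizontal separation: B is one-sided in y; use ¬InBox for x
        have hylr : (∃ a ∈ prevSet p k.val, a.2 ≤ (p k).2) ∧
            (∃ a ∈ prevSet p k.val, (p k).2 ≤ a.2) := by
          rcases hh with ⟨hP, hQ⟩ | ⟨hP, hQ⟩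
          · exact ⟨⟨p j1, hj1K, le_of_lt (hP _ hj1P)⟩, ⟨p j0, hj0K, le_of_lt (hQ _ hj0Q)⟩⟩
          · exact ⟨⟨p j0, hj0K, le_of_lt (hQ _ hj0Q)⟩, ⟨p j1, hj1K, le_of_lt (hP _ hj1P)⟩⟩
        have hx := notbox_x (p k) (prevSet p k.val) hbox hylr.1 hylr.2
        refine ⟨hx.imp (fun h a ha => h a (hBsub ha)) (fun h a ha => h a (hBsub ha)), ?_⟩
        rcases hh with ⟨_, hQ⟩ | ⟨_, hQ⟩
        · exact Or.inr fun a ha => hQ a (hBQ ha)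
        · exact Or.inl fun a ha => hQ a (hBQ ha)
    · exact indep_oneSided (p k) (prevSet p k.val) (prevSet p i.val) hBsub hne hind'

/-- any pin representation of a simple pin-permutation is proper. -/
theorem pinSeq_of_simple_isProper {n : ℕ} (σ : Equiv.Perm (Fin n)) (p : Fin n → Pt)
    (hpin : IsPinSeq p) (hrep : RepresentsPerm p σ) (hsimple : IsSimplePerm σ) :
    IsProperPinSeq p := by
  refine ⟨hpin, fun i hi => ?_⟩
  rcases (hpin.2 i (by omega)).2 with hsep | hind
  · exact hsep
  · exfalso
    obtain ⟨e, he⟩ := hrep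
    have hos := oneSided p hpin i hi hind
    set S0 : Set (Fin n) := {j | j.val < i.val} with hS0
    have hmem : ∀ j : Fin n, j.val < i.val → p j ∈ prevSet p i.val := fun j hj => ⟨j, hj, rfl⟩
    -- the image of S0 under e is an interval of positions
    have hT1 : IsIntervalSet (e '' S0) := by
      rintro a ⟨u1, hu1, rfl⟩ b ⟨u2, hu2, rfl⟩ c hac hcb
      set k := e.symm c with hkdef
      have hck : c = e k := (e.apply_symm_apply c).symm
      by_cases hki : k.val < i.val
      · exact ⟨k, hki, hck.symm⟩
      · exfalso
        push_neg at hki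
        have h1 : (p u1).1 < (p k).1 := by
          refine (he u1 k).1.mpr (lt_of_le_of_ne (hck ▸ hac) fun h => ?_)
          exact absurd (e.injective h ▸ hu1) (not_lt.mpr hki)
        have h2 : (p k).1 < (p u2).1 := by
          refine (he k u2).1.mpr (lt_of_le_of_ne (hck ▸ hcb) fun h => ?_)
          exact absurd (e.injective h.symm ▸ hu2) (not_lt.mpr hki)
        rcases (hos k hki).1 with h | h
        · exact absurd h2 (not_lt.mpr (le_of_lt (h _ (hmem u2 hu2))))
        · exact absurd h1 (not_lt.mpr (le_of_lt (h _ (hmem u1 hu1))))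
    -- its image under σ is an interval of values
    have hT2 : IsIntervalSet (σ '' (e '' S0)) := by
      rw [Set.image_image]
      rintro a ⟨u1, hu1, rfl⟩ b ⟨u2, hu2, rfl⟩ c hac hcb
      set k := e.symm (σ.symm c) with hkdef
      have hck : c = σ (e k) := by simp [hkdef]
      by_cases hki : k.val < i.val
      · exact ⟨k, hki, hck.symm⟩
      · exfalso
        push_neg at hki
        have h1 : (p u1).2 < (p k).2 := by
          refine (he u1 k).2.mpr (lt_of_le_of_ne (hck ▸ hac) fun h => ?_)
          exact absurd (e.injective (σ.injective h) ▸ hu1) (not_lt.mpr hki)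
        have h2 : (p k).2 < (p u2).2 := by
          refine (he k u2).2.mpr (lt_of_le_of_ne (hck ▸ hcb) fun h => ?_)
          exact absurd (e.injective (σ.injective h.symm) ▸ hu2) (not_lt.mpr hki)
        rcases (hos k hki).2 with h | h
        · exact absurd h2 (not_lt.mpr (le_of_lt (h _ (hmem u2 hu2))))
        · exact absurd h1 (not_lt.mpr (le_of_lt (h _ (hmem u1 hu1))))
    rcases hsimple (e '' S0) hT1 hT2 with hle | huniv
    · -- but it has at least two elements
      have hn0 : (0 : ℕ) < n := lt_of_le_of_lt (Nat.zero_le _) i.isLt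
      have hn1 : (1 : ℕ) < n := by omega
      have hm0 : e ⟨0, hn0⟩ ∈ e '' S0 := ⟨⟨0, hn0⟩, show (0 : ℕ) < i.val by omega, rfl⟩
      have hm1 : e ⟨1, hn1⟩ ∈ e '' S0 := ⟨⟨1, hn1⟩, show (1 : ℕ) < i.val by omega, rfl⟩
      have hne01 : e ⟨0, hn0⟩ ≠ e ⟨1, hn1⟩ := by
        intro h
        have := e.injective h
        simp [Fin.ext_iff] at this
      have : 1 < (e '' S0).ncard :=
        (Set.one_lt_ncard (Set.toFinite _)).mpr ⟨_, hm0, _, hm1, hne01⟩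
      omega
    · -- and it is not everything: e i is missing
      have : e i ∈ e '' S0 := huniv ▸ Set.mem_univ (e i)
      obtain ⟨j, hj, hej⟩ := this
      have := e.injective hej
      subst this
      exact absurd hj (by simp [hS0])

end PinWords
end

section
/- In a proper pin representation (p₁,…,p_n) of a permutation σ, if p_i occupies position k in σ (i.e., p_i corresponds to the point (k, σ_k)), then p_{i+1} corresponds to a point whose position is k−1 or k+1, or whose value is σ_k−1 or σ_k+1. -/
namespace PinWords

open Letter

private lemma core_vert {n : ℕ} (p : Fin n → Pt)
    (hpin : ∀ i : Fin n, 1 ≤ i.val → ¬ InBox (prevSet p i.val) (p i))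
    (hprop : ∀ i : Fin n, 2 ≤ i.val →
      Separates (p i) {x | ∃ j : Fin n, j.val + 1 = i.val ∧ x = p j} (prevSet p (i.val - 1)))
    (i j : Fin n) (hij : i.val + 1 = j.val) (hj : 2 ≤ j.val)
    (hsep : SepVert (p j) {x | ∃ j' : Fin n, j'.val + 1 = j.val ∧ x = p j'} (prevSet p (j.val - 1)))
    (k : Fin n)
    (hk : ((p i).1 < (p k).1 ∧ (p k).1 < (p j).1) ∨ ((p j).1 < (p k).1 ∧ (p k).1 < (p i).1)) :
    False := by
  have h0lt : (0 : ℕ) < n := lt_of_le_of_lt (Nat.zero_le _) j.isLt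
  have hiP : p i ∈ {x | ∃ j' : Fin n, j'.val + 1 = j.val ∧ x = p j'} := ⟨i, hij, rfl⟩
  set z : Fin n := ⟨0, h0lt⟩ with hz
  have hzv : z.val = 0 := rfl
  have h0mem : p z ∈ prevSet p (j.val - 1) := ⟨z, by omega, rfl⟩
  have hio : ((p i).1 < (p j).1 ∧ (p j).1 < (p z).1) ∨
      ((p j).1 < (p i).1 ∧ (p z).1 < (p j).1) := by
    rcases hsep with ⟨h1, h2⟩ | ⟨h1, h2⟩
    · exact Or.inl ⟨h1 _ hiP, h2 _ h0mem⟩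
    · exact Or.inr ⟨h1 _ hiP, h2 _ h0mem⟩
  have hkj : j.val < k.val := by
    rcases lt_trichotomy k.val j.val with h | h | h
    · by_cases hki : k.val = i.val
      · have hki' : k = i := Fin.ext hki
        subst hki'
        rcases hk with ⟨a, b⟩ | ⟨a, b⟩ <;> linarith
      · have hkmem : p k ∈ prevSet p (j.val - 1) := ⟨k, by omega, rfl⟩
        rcases hsep with ⟨h1, h2⟩ | ⟨h1, h2⟩
        · have ha := h2 _ hkmem; have hb := h1 _ hiP
          rcases hk with ⟨a, b⟩ | ⟨a, b⟩ <;> linarith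
        · have ha := h2 _ hkmem; have hb := h1 _ hiP
          rcases hk with ⟨a, b⟩ | ⟨a, b⟩ <;> linarith
    · have hkj' : k = j := Fin.ext h
      subst hkj'
      rcases hk with ⟨a, b⟩ | ⟨a, b⟩ <;> linarith
    · exact h
  have hik : p i ∈ prevSet p k.val := ⟨i, by omega, rfl⟩
  have hjk : p j ∈ prevSet p k.val := ⟨j, by omega, rfl⟩
  -- p k is extreme in the y-direction among all previous points
  have hy : (∀ a ∈ prevSet p k.val, a.2 < (p k).2) ∨
      (∀ a ∈ prevSet p k.val, (p k).2 < a.2) := by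
    have hnib := hpin k (by omega)
    unfold InBox at hnib
    push_neg at hnib
    have hA : ∃ a ∈ prevSet p k.val, a.1 ≤ (p k).1 := by
      rcases hk with ⟨a, b⟩ | ⟨a, b⟩
      · exact ⟨p i, hik, le_of_lt a⟩
      · exact ⟨p j, hjk, le_of_lt a⟩
    have hB : ∃ a ∈ prevSet p k.val, (p k).1 ≤ a.1 := by
      rcases hk with ⟨a, b⟩ | ⟨a, b⟩
      · exact ⟨p j, hjk, le_of_lt b⟩
      · exact ⟨p i, hik, le_of_lt b⟩
    by_cases hC : ∃ a ∈ prevSet p k.val, a.2 ≤ (p k).2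
    · have hD := hnib hA hB hC
      left
      intro a ha
      have := hD a ha
      linarith
    · push_neg at hC
      right
      intro a ha
      have := hC a ha
      linarith
  -- two previous points straddle p k in the x-direction
  have hkey : (∃ a ∈ prevSet p (k.val - 1), a.1 < (p k).1) ∧
      (∃ b ∈ prevSet p (k.val - 1), (p k).1 < b.1) := by
    by_cases hkj1 : j.val + 1 < k.val
    · have hik1 : p i ∈ prevSet p (k.val - 1) := ⟨i, by omega, rfl⟩
      have hjk1 : p j ∈ prevSet p (k.val - 1) := ⟨j, by omega, rfl⟩
      rcases hk with ⟨a, b⟩ | ⟨a, b⟩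
      · exact ⟨⟨p i, hik1, a⟩, ⟨p j, hjk1, b⟩⟩
      · exact ⟨⟨p j, hjk1, a⟩, ⟨p i, hik1, b⟩⟩
    · have hik1 : p i ∈ prevSet p (k.val - 1) := ⟨i, by omega, rfl⟩
      have h0k1 : p z ∈ prevSet p (k.val - 1) := ⟨z, by omega, rfl⟩
      rcases hio with ⟨h1, h2⟩ | ⟨h1, h2⟩
      · rcases hk with ⟨a, b⟩ | ⟨a, b⟩
        · exact ⟨⟨p i, hik1, a⟩, ⟨p z, h0k1, by linarith⟩⟩
        · exact absurd a (by linarith)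
      · rcases hk with ⟨a, b⟩ | ⟨a, b⟩
        · exact absurd a (by linarith)
        · exact ⟨⟨p z, h0k1, by linarith⟩, ⟨p i, hik1, b⟩⟩
  obtain ⟨⟨a, ha, hax⟩, ⟨b, hb, hbx⟩⟩ := hkey
  rcases hprop k (by omega) with hv | hh
  · rcases hv with ⟨_, hQ⟩ | ⟨_, hQ⟩
    · exact absurd (hQ _ ha) (by linarith)
    · exact absurd (hQ _ hb) (by linarith)
  · have hk1lt : k.val - 1 < n := by omega
    set k1 : Fin n := ⟨k.val - 1, hk1lt⟩ with hk1
    have hk1v : k1.val = k.val - 1 := rfl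
    have hk1P : p k1 ∈ {x | ∃ j' : Fin n, j'.val + 1 = k.val ∧ x = p j'} := ⟨k1, by omega, rfl⟩
    have hik1 : p i ∈ prevSet p (k.val - 1) := ⟨i, by omega, rfl⟩
    have hk1k : p k1 ∈ prevSet p k.val := ⟨k1, by omega, rfl⟩
    rcases hh with ⟨hP, hQ⟩ | ⟨hP, hQ⟩
    · have h1 := hP _ hk1P
      have h2 := hQ _ hik1
      rcases hy with hy | hy
      · exact absurd (hy _ hik) (by linarith)
      · exact absurd (hy _ hk1k) (by linarith)
    · have h1 := hP _ hk1P
      have h2 := hQ _ hik1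
      rcases hy with hy | hy
      · exact absurd (hy _ hk1k) (by linarith)
      · exact absurd (hy _ hik) (by linarith)

private lemma core_horiz {n : ℕ} (p : Fin n → Pt)
    (hpin : ∀ i : Fin n, 1 ≤ i.val → ¬ InBox (prevSet p i.val) (p i))
    (hprop : ∀ i : Fin n, 2 ≤ i.val →
      Separates (p i) {x | ∃ j : Fin n, j.val + 1 = i.val ∧ x = p j} (prevSet p (i.val - 1)))
    (i j : Fin n) (hij : i.val + 1 = j.val) (hj : 2 ≤ j.val)
    (hsep : SepHoriz (p j) {x | ∃ j' : Fin n, j'.val + 1 = j.val ∧ x = p j'} (prevSet p (j.val - 1)))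
    (k : Fin n)
    (hk : ((p i).2 < (p k).2 ∧ (p k).2 < (p j).2) ∨ ((p j).2 < (p k).2 ∧ (p k).2 < (p i).2)) :
    False := by
  have h0lt : (0 : ℕ) < n := lt_of_le_of_lt (Nat.zero_le _) j.isLt
  have hiP : p i ∈ {x | ∃ j' : Fin n, j'.val + 1 = j.val ∧ x = p j'} := ⟨i, hij, rfl⟩
  set z : Fin n := ⟨0, h0lt⟩ with hz
  have hzv : z.val = 0 := rfl
  have h0mem : p z ∈ prevSet p (j.val - 1) := ⟨z, by omega, rfl⟩
  have hio : ((p i).2 < (p j).2 ∧ (p j).2 < (p z).2) ∨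
      ((p j).2 < (p i).2 ∧ (p z).2 < (p j).2) := by
    rcases hsep with ⟨h1, h2⟩ | ⟨h1, h2⟩
    · exact Or.inl ⟨h1 _ hiP, h2 _ h0mem⟩
    · exact Or.inr ⟨h1 _ hiP, h2 _ h0mem⟩
  have hkj : j.val < k.val := by
    rcases lt_trichotomy k.val j.val with h | h | h
    · by_cases hki : k.val = i.val
      · have hki' : k = i := Fin.ext hki
        subst hki'
        rcases hk with ⟨a, b⟩ | ⟨a, b⟩ <;> linarith
      · have hkmem : p k ∈ prevSet p (j.val - 1) := ⟨k, by omega, rfl⟩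
        rcases hsep with ⟨h1, h2⟩ | ⟨h1, h2⟩
        · have ha := h2 _ hkmem; have hb := h1 _ hiP
          rcases hk with ⟨a, b⟩ | ⟨a, b⟩ <;> linarith
        · have ha := h2 _ hkmem; have hb := h1 _ hiP
          rcases hk with ⟨a, b⟩ | ⟨a, b⟩ <;> linarith
    · have hkj' : k = j := Fin.ext h
      subst hkj'
      rcases hk with ⟨a, b⟩ | ⟨a, b⟩ <;> linarith
    · exact h
  have hik : p i ∈ prevSet p k.val := ⟨i, by omega, rfl⟩
  have hjk : p j ∈ prevSet p k.val := ⟨j, by omega, rfl⟩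
  -- p k is extreme in the x-direction among all previous points
  have hy : (∀ a ∈ prevSet p k.val, a.1 < (p k).1) ∨
      (∀ a ∈ prevSet p k.val, (p k).1 < a.1) := by
    have hnib := hpin k (by omega)
    unfold InBox at hnib
    push_neg at hnib
    have hC : ∃ a ∈ prevSet p k.val, a.2 ≤ (p k).2 := by
      rcases hk with ⟨a, b⟩ | ⟨a, b⟩
      · exact ⟨p i, hik, le_of_lt a⟩
      · exact ⟨p j, hjk, le_of_lt a⟩
    have hD : ∃ a ∈ prevSet p k.val, (p k).2 ≤ a.2 := by
      rcases hk with ⟨a, b⟩ | ⟨a, b⟩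
      · exact ⟨p j, hjk, le_of_lt b⟩
      · exact ⟨p i, hik, le_of_lt b⟩
    by_cases hA : ∃ a ∈ prevSet p k.val, a.1 ≤ (p k).1
    · by_cases hB : ∃ a ∈ prevSet p k.val, (p k).1 ≤ a.1
      · obtain ⟨d, hd, hd2⟩ := hD
        have := hnib hA hB hC d hd
        linarith
      · push_neg at hB
        left
        intro a ha
        have := hB a ha
        linarith
    · push_neg at hA
      right
      intro a ha
      have := hA a ha
      linarith
  -- two previous points straddle p k in the y-direction
  have hkey : (∃ a ∈ prevSet p (k.val - 1), a.2 < (p k).2) ∧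
      (∃ b ∈ prevSet p (k.val - 1), (p k).2 < b.2) := by
    by_cases hkj1 : j.val + 1 < k.val
    · have hik1 : p i ∈ prevSet p (k.val - 1) := ⟨i, by omega, rfl⟩
      have hjk1 : p j ∈ prevSet p (k.val - 1) := ⟨j, by omega, rfl⟩
      rcases hk with ⟨a, b⟩ | ⟨a, b⟩
      · exact ⟨⟨p i, hik1, a⟩, ⟨p j, hjk1, b⟩⟩
      · exact ⟨⟨p j, hjk1, a⟩, ⟨p i, hik1, b⟩⟩
    · have hik1 : p i ∈ prevSet p (k.val - 1) := ⟨i, by omega, rfl⟩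
      have h0k1 : p z ∈ prevSet p (k.val - 1) := ⟨z, by omega, rfl⟩
      rcases hio with ⟨h1, h2⟩ | ⟨h1, h2⟩
      · rcases hk with ⟨a, b⟩ | ⟨a, b⟩
        · exact ⟨⟨p i, hik1, a⟩, ⟨p z, h0k1, by linarith⟩⟩
        · exact absurd a (by linarith)
      · rcases hk with ⟨a, b⟩ | ⟨a, b⟩
        · exact absurd a (by linarith)
        · exact ⟨⟨p z, h0k1, by linarith⟩, ⟨p i, hik1, b⟩⟩
  obtain ⟨⟨a, ha, hax⟩, ⟨b, hb, hbx⟩⟩ := hkey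
  rcases hprop k (by omega) with hv | hh
  · have hk1lt : k.val - 1 < n := by omega
    set k1 : Fin n := ⟨k.val - 1, hk1lt⟩ with hk1
    have hk1v : k1.val = k.val - 1 := rfl
    have hk1P : p k1 ∈ {x | ∃ j' : Fin n, j'.val + 1 = k.val ∧ x = p j'} := ⟨k1, by omega, rfl⟩
    have hik1 : p i ∈ prevSet p (k.val - 1) := ⟨i, by omega, rfl⟩
    have hk1k : p k1 ∈ prevSet p k.val := ⟨k1, by omega, rfl⟩
    rcases hv with ⟨hP, hQ⟩ | ⟨hP, hQ⟩
    · have h1 := hP _ hk1P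
      have h2 := hQ _ hik1
      rcases hy with hy | hy
      · exact absurd (hy _ hik) (by linarith)
      · exact absurd (hy _ hk1k) (by linarith)
    · have h1 := hP _ hk1P
      have h2 := hQ _ hik1
      rcases hy with hy | hy
      · exact absurd (hy _ hk1k) (by linarith)
      · exact absurd (hy _ hik) (by linarith)
  · rcases hh with ⟨_, hQ⟩ | ⟨_, hQ⟩
    · exact absurd (hQ _ ha) (by linarith)
    · exact absurd (hQ _ hb) (by linarith)

/-- in a proper pin representation of σ (whose points form the
diagram of σ), each separating pin is adjacent to the previous pin in position
or in value. -/
theorem proper_pin_adjacent {n : ℕ} (σ : Equiv.Perm (Fin n)) (p : Fin n → Pt)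
    (hp : IsProperPinSeq p)
    (hdiag : Set.range p = {x : Pt | ∃ k : Fin n, x = ((k.val : ℤ), ((σ k).val : ℤ))}) :
    ∀ i j : Fin n, i.val + 1 = j.val → 2 ≤ j.val →
      (p j).1 = (p i).1 + 1 ∨ (p j).1 = (p i).1 - 1 ∨
      (p j).2 = (p i).2 + 1 ∨ (p j).2 = (p i).2 - 1 := by
  intro i j hij hj2
  obtain ⟨⟨hdc, hpin⟩, hprop⟩ := hp
  have hpin' : ∀ i : Fin n, 1 ≤ i.val → ¬ InBox (prevSet p i.val) (p i) :=
    fun i h => (hpin i h).1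
  have hmem : ∀ k : Fin n, ∃ m : Fin n, p k = ((m.val : ℤ), ((σ m).val : ℤ)) := by
    intro k
    have : p k ∈ {x : Pt | ∃ m : Fin n, x = ((m.val : ℤ), ((σ m).val : ℤ))} :=
      hdiag ▸ Set.mem_range_self k
    exact this
  have hsurj : ∀ m : Fin n, ∃ k : Fin n, p k = ((m.val : ℤ), ((σ m).val : ℤ)) := by
    intro m
    have : ((m.val : ℤ), ((σ m).val : ℤ)) ∈ Set.range p := by
      rw [hdiag]; exact ⟨m, rfl⟩
    obtain ⟨k, hk⟩ := this
    exact ⟨k, hk⟩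
  have hbd : ∀ k : Fin n, 0 ≤ (p k).1 ∧ (p k).1 < n ∧ 0 ≤ (p k).2 ∧ (p k).2 < n := by
    intro k
    obtain ⟨m, hm⟩ := hmem k
    rw [hm]
    refine ⟨by positivity, ?_, by positivity, ?_⟩
    · show ((m.val : ℤ)) < (n : ℤ); exact_mod_cast m.isLt
    · show (((σ m).val : ℤ)) < (n : ℤ); exact_mod_cast (σ m).isLt
  have hxsurj : ∀ v : ℤ, 0 ≤ v → v < n → ∃ k : Fin n, (p k).1 = v := by
    intro v h0 h1
    have hvn : v.toNat < n := by omega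
    obtain ⟨k, hk⟩ := hsurj ⟨v.toNat, hvn⟩
    exact ⟨k, by rw [hk]; simp; omega⟩
  have hysurj : ∀ v : ℤ, 0 ≤ v → v < n → ∃ k : Fin n, (p k).2 = v := by
    intro v h0 h1
    have hvn : v.toNat < n := by omega
    obtain ⟨k, hk⟩ := hsurj (σ.symm ⟨v.toNat, hvn⟩)
    refine ⟨k, ?_⟩
    rw [hk]
    simp only [Equiv.apply_symm_apply]
    simp; omega
  have hijne : i ≠ j := by
    intro h; subst h; omega
  rcases hprop j hj2 with hv | hh
  · -- vertical separation : adjacent positions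
    have hne : (p j).1 ≠ (p i).1 := ((hdc i j hijne).1).symm
    rcases lt_or_gt_of_ne hne with hlt | hgt
    · refine Or.inr (Or.inl ?_)
      by_contra hc
      have hgap : (p j).1 < (p i).1 - 1 := by omega
      obtain ⟨k, hk⟩ := hxsurj ((p j).1 + 1) (by have := (hbd j).1; omega)
        (by have := (hbd i).2.1; omega)
      exact core_vert p hpin' hprop i j hij hj2 hv k (Or.inr ⟨by omega, by omega⟩)
    · refine Or.inl ?_
      by_contra hc
      have hgap : (p i).1 + 1 < (p j).1 := by omega
      obtain ⟨k, hk⟩ := hxsurj ((p i).1 + 1) (by have := (hbd i).1; omega)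
        (by have := (hbd j).2.1; omega)
      exact core_vert p hpin' hprop i j hij hj2 hv k (Or.inl ⟨by omega, by omega⟩)
  · -- horizontal separation : adjacent values
    have hne : (p j).2 ≠ (p i).2 := ((hdc i j hijne).2).symm
    rcases lt_or_gt_of_ne hne with hlt | hgt
    · refine Or.inr (Or.inr (Or.inr ?_))
      by_contra hc
      have hgap : (p j).2 < (p i).2 - 1 := by omega
      obtain ⟨k, hk⟩ := hysurj ((p j).2 + 1) (by have := (hbd j).2.2.1; omega)
        (by have := (hbd i).2.2.2; omega)
      exact core_horiz p hpin' hprop i j hij hj2 hh k (Or.inr ⟨by omega, by omega⟩)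
    · refine Or.inr (Or.inr (Or.inl ?_))
      by_contra hc
      have hgap : (p i).2 + 1 < (p j).2 := by omega
      obtain ⟨k, hk⟩ := hysurj ((p i).2 + 1) (by have := (hbd i).2.2.1; omega)
        (by have := (hbd j).2.2.2; omega)
      exact core_horiz p hpin' hprop i j hij hj2 hh k (Or.inl ⟨by omega, by omega⟩)

end PinWords
end

section
/- Let w be a strict pin word with corresponding extended pin sequence (p₀, p₁, …, p_n). For every i ≥ 2, the numeral q(w_{i-1}, w_i) — defined as φ⁻¹(w_{i-1}w_i) if i ≥ 3, and as φ⁻¹(BC) where φ(w₁w₂) = ABC if i = 2 — equals the quadrant (1, 2, 3, or 4) of the bounding box of {p₀,…,p_{i-2}} in which the pin p_i lies. -/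
namespace PinWords

open Letter

/-! ### Auxiliary machinery for Statement 14 -/

def QFact : Letter → Pt → Set Pt → Prop
  | N1, q, S => ∀ s ∈ S, s.1 < q.1 ∧ s.2 < q.2
  | N2, q, S => ∀ s ∈ S, q.1 < s.1 ∧ s.2 < q.2
  | N3, q, S => ∀ s ∈ S, q.1 < s.1 ∧ q.2 < s.2
  | N4, q, S => ∀ s ∈ S, s.1 < q.1 ∧ q.2 < s.2
  | U, q, S => ∀ s ∈ S, s.2 < q.2 ∧ (0:ℤ) < 1
  | D, q, S => ∀ s ∈ S, q.2 < s.2 ∧ (0:ℤ) < 1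
  | L, q, S => ∀ s ∈ S, q.1 < s.1 ∧ (0:ℤ) < 1
  | R, q, S => ∀ s ∈ S, s.1 < q.1 ∧ (0:ℤ) < 1

def BFact : Letter → Pt → Pt → Set Pt → Prop
  | U, pt, q, S => (∀ s ∈ S, s.2 < pt.2) ∧
      ((q.1 < pt.1 ∧ ∀ s ∈ S, pt.1 < s.1) ∨ (pt.1 < q.1 ∧ ∀ s ∈ S, s.1 < pt.1))
  | D, pt, q, S => (∀ s ∈ S, pt.2 < s.2) ∧
      ((q.1 < pt.1 ∧ ∀ s ∈ S, pt.1 < s.1) ∨ (pt.1 < q.1 ∧ ∀ s ∈ S, s.1 < pt.1))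
  | L, pt, q, S => (∀ s ∈ S, pt.1 < s.1) ∧
      ((q.2 < pt.2 ∧ ∀ s ∈ S, pt.2 < s.2) ∨ (pt.2 < q.2 ∧ ∀ s ∈ S, s.2 < pt.2))
  | R, pt, q, S => (∀ s ∈ S, s.1 < pt.1) ∧
      ((q.2 < pt.2 ∧ ∀ s ∈ S, pt.2 < s.2) ∨ (pt.2 < q.2 ∧ ∀ s ∈ S, s.2 < pt.2))
  | _, _, _, _ => False

lemma toQFact (a : Letter) (q : Pt) (S P O : Set Pt) (h : LetterEncodes a q S P O) :
    QFact a q S := by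
  cases a <;>
    first
    | exact h.2
    | exact fun s hs => ⟨h.1 s hs, by norm_num⟩

lemma toBFact (b : Letter) (hb : isDir b) (pt q : Pt) (prev P S : Set Pt)
    (hq : q ∈ P) (hsub : S ⊆ prev) (h : LetterEncodes b pt prev P S) :
    BFact b pt q S := by
  cases b <;>
    first
    | exact hb.elim
    | exact ⟨fun s hs => h.1 s (hsub hs),
        h.2.imp (fun hx => ⟨hx.1 q hq, hx.2⟩) (fun hx => ⟨hx.1 q hq, hx.2⟩)⟩

lemma key_lemma (a b : Letter) (pt q : Pt) (S : Set Pt) (hS : ∃ s, s ∈ S)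
    (hab : isNumeral a ∨ (isHoriz a ∧ isVert b) ∨ (isVert a ∧ isHoriz b))
    (h1 : QFact a q S) (h2 : BFact b pt q S) :
    InQuadrant (qfun a b) pt S := by
  obtain ⟨s0, hs0⟩ := hS
  cases a <;> cases b <;>
    first
    | exact h2.elim
    | (obtain ⟨hm, hsep⟩ := h2
       rcases hsep with ⟨h3, h4⟩ | ⟨h3, h4⟩ <;>
         refine fun s hs => ⟨?_, ?_⟩ <;>
           linarith [(h1 s hs).1, (h1 s hs).2, (h1 s0 hs0).1, (h1 s0 hs0).2,
             h4 s hs, h4 s0 hs0, hm s hs, hm s0 hs0, h3])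
    | (rcases hab with h | ⟨h, h'⟩ | ⟨h, h'⟩ <;>
         first | exact h.elim | exact h'.elim)

lemma get_cons_pos (c : Letter) (l : List Letter) (i : Fin (c :: l).length) (h0 : 0 < i.val)
    (hlt : i.val - 1 < l.length) :
    (c :: l).get i = l.get ⟨i.val - 1, hlt⟩ := by
  obtain ⟨n, hn⟩ := i
  cases n with
  | zero => exact (Nat.lt_irrefl 0 h0).elim
  | succ m => rfl

lemma alt_get : ∀ (l : List Letter), Alternating l → ∀ i, (hi : i + 1 < l.length) →
    (isHoriz (l.get ⟨i, by omega⟩) ∧ isVert (l.get ⟨i+1, hi⟩)) ∨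
    (isVert (l.get ⟨i, by omega⟩) ∧ isHoriz (l.get ⟨i+1, hi⟩))
  | [], _, _, hi => absurd hi (by simp)
  | [_], _, i, hi => absurd hi (by simp)
  | _ :: b :: t, h, 0, _ => h.1
  | _ :: b :: t, h, i+1, hi => alt_get (b :: t) h.2 i (by simpa using hi)

/-- for a strict pin word w encoding the extended pin sequence
(p₀,…,p_n), the numeral q(w_{i-1}, w_i) gives the quadrant of the bounding box
of {p₀,…,p_{i-2}} in which the pin p_i lies. -/
theorem q_gives_quadrant (w : List Letter) (hw : StrictPinWord w)
    (p : Fin (w.length + 1) → Pt) (henc : Encodes w p) :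
    ∀ j k : Fin w.length, j.val + 1 = k.val →
      InQuadrant (qfun (w.get j) (w.get k)) (p k.succ) (prevSet p k.val) := by
  intro j k hjk
  obtain ⟨c, rest, rfl⟩ : ∃ c rest, w = c :: rest := by
    cases w with
    | nil => exact absurd hw (by simp [StrictPinWord])
    | cons c rest => exact ⟨c, rest, rfl⟩
  obtain ⟨hc, hne, hdir, halt⟩ := hw
  obtain ⟨hdc, henc2⟩ := henc
  have h1 := henc2 j
  have h2 := henc2 k
  rw [hjk] at h1
  have hlen : (c :: rest).length = rest.length + 1 := rfl
  have hkl : (k : ℕ) < rest.length + 1 := by have := k.isLt; omega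
  have hjl : (j : ℕ) < rest.length + 1 := by have := j.isLt; omega
  have hS : ∃ s, s ∈ prevSet p k.val :=
    ⟨p ⟨0, Nat.succ_pos _⟩, ⟨0, Nat.succ_pos _⟩, show 0 < k.val by omega, rfl⟩
  have hq1 : QFact ((c :: rest).get j) (p j.succ) (prevSet p k.val) :=
    toQFact _ _ _ _ _ h1
  have hqmem : p j.succ ∈ {x | ∃ j' : Fin ((c :: rest).length + 1), j'.val = k.val ∧ x = p j'} :=
    ⟨j.succ, by simp [Fin.val_succ, hjk], rfl⟩
  have hsub : prevSet p k.val ⊆ prevSet p (k.val + 1) := by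
    rintro x ⟨i, hi, rfl⟩
    exact ⟨i, by omega, rfl⟩
  -- b is a direction
  have hbk := get_cons_pos c rest k (by omega) (by omega)
  have hbdir : isDir ((c :: rest).get k) := by
    rw [hbk]; exact hdir _ (List.get_mem _ _)
  have hb2 : BFact ((c :: rest).get k) (p k.succ) (p j.succ) (prevSet p k.val) :=
    toBFact _ hbdir _ _ _ _ _ hqmem hsub h2
  have hab : isNumeral ((c :: rest).get j) ∨
      (isHoriz ((c :: rest).get j) ∧ isVert ((c :: rest).get k)) ∨
      (isVert ((c :: rest).get j) ∧ isHoriz ((c :: rest).get k)) := by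
    rcases Nat.eq_zero_or_pos j.val with hj0 | hjpos
    · left
      have : j = ⟨0, by omega⟩ := Fin.ext hj0
      rw [this]
      exact hc
    · right
      have hja := get_cons_pos c rest j (by omega) (by omega)
      have hkb : (c :: rest).get k = rest.get ⟨(j.val - 1) + 1, by omega⟩ := by
        rw [hbk]
        congr 1
        exact Fin.ext (show (k:ℕ) - 1 = j.val - 1 + 1 by omega)
      rw [hja, hkb]
      exact alt_get rest halt (j.val - 1) (by omega)
  exact key_lemma _ _ _ _ _ hS hab hq1 hb2


end PinWords
end
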